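/- Let w > 0 and t > 0, and define the sequence xₙ by x₀ = w·coth(t) and x_{n+1} = xₙ(xₙ² + 3w²)/(3xₙ² + w²). Then xₙ = w·coth(3ⁿ t) for every n ≥ 0. -/

import Mathlib

open Real

theorem landen_coth_closed_form (w t : ℝ) (hw : 0 < w) (ht : 0 < t) (x : ℕ → ℝ)
    (hx0 : x 0 = w * (Real.cosh t / Real.sinh t))
    (hx : ∀ n, x (n + 1) = x n * (x n ^ 2 + 3 * w ^ 2) / (3 * x n ^ 2 + w ^ 2)) :
    ∀ n : ℕ, x n = w * (Real.cosh (3 ^ n * t) / Real.sinh (3 ^ n * t)) := by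
  intro n
  induction n with
  | zero => simpa using hx0
  | succ n ih =>
    set s : ℝ := 3 ^ n * t with hs
    have hspos : 0 < s := by positivity
    have hsh : 0 < Real.sinh s := by simpa using Real.sinh_lt_sinh.2 hspos
    have hc : 0 < Real.cosh s := Real.cosh_pos s
    have hpyth : Real.cosh s ^ 2 = 1 + Real.sinh s ^ 2 := by
      nlinarith [Real.cosh_sq s]
    have h3 : (3:ℝ) ^ (n+1) * t = s + s + s := by
      rw [hs]; ring
    have hc3 : Real.cosh ((3:ℝ) ^ (n+1) * t) = 4 * Real.cosh s ^ 3 - 3 * Real.cosh s := by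
      rw [h3, Real.cosh_add, Real.cosh_add, Real.sinh_add]
      nlinarith [hpyth]
    have hsh3 : Real.sinh ((3:ℝ) ^ (n+1) * t) = Real.sinh s * (4 * Real.cosh s ^ 2 - 1) := by
      rw [h3, Real.sinh_add, Real.sinh_add, Real.cosh_add]
      nlinarith [hpyth]
    have hden : 4 * Real.cosh s ^ 2 - 1 > 0 := by nlinarith
    rw [hx n, ih, hc3, hsh3]
    have hdenom : 3 * (w * (Real.cosh s / Real.sinh s)) ^ 2 + w ^ 2 > 0 := by positivity
    have hden' : 4 * Real.cosh s ^ 2 - 1 ≠ 0 := ne_of_gt hden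
    field_simp
    rw [eq_div_iff (by linarith : Real.cosh s ^ 2 * 4 - 1 ≠ 0)]
    linear_combination (-8 * Real.cosh s ^ 2) * hpyth
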